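/- Let v ∈ ℝ², r > 0, and let A, B be points with 0 < dist(v,A), dist(v,B) ≤ 2r. Define for each point P its angular interval I_P = [α_P − arccos(d_P/(2r)), α_P + arccos(d_P/(2r))] where d_P = dist(v,P) and α_P is its polar angle about v. Then there exists a disk of radius r whose boundary passes through v containing both A and B if and only if I_A ∩ I_B ≠ ∅ (intervals interpreted on the circle ℝ/2πℤ). -/

import Mathlib

abbrev Pt := EuclideanSpace ℝ (Fin 2)

/-- Unit vector in direction `θ`. -/
noncomputable def dir (θ : ℝ) : Pt := (WithLp.equiv 2 (Fin 2 → ℝ)).symm ![Real.cos θ, Real.sin θ]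

/-- The angular interval of a point at distance `d_P ∈ (0, 2r]` and polar angle `α_P` from `v`,
interpreted on the circle `ℝ/2πℤ`. -/
def angInterval (r d_P α_P : ℝ) : Set ℝ :=
  {θ : ℝ | ∃ k : ℤ, |θ - (α_P + 2 * Real.pi * k)| ≤ Real.arccos (d_P / (2 * r))}

lemma norm_dir (θ : ℝ) : ‖dir θ‖ = 1 := by
  have h : ‖dir θ‖ ^ 2 = 1 := by
    rw [← real_inner_self_eq_norm_sq]
    simp only [dir, PiLp.inner_apply, Fin.sum_univ_two, WithLp.equiv_symm_apply, PiLp.toLp_apply,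
      Matrix.cons_val_zero, Matrix.cons_val_one, Matrix.head_cons, RCLike.inner_apply, conj_trivial]
    nlinarith [Real.sin_sq_add_cos_sq θ]
  nlinarith [norm_nonneg (dir θ)]

lemma inner_dir (α θ : ℝ) : (inner ℝ (dir α) (dir θ) : ℝ) = Real.cos (θ - α) := by
  simp only [dir, PiLp.inner_apply, Fin.sum_univ_two, WithLp.equiv_symm_apply, PiLp.toLp_apply,
    Matrix.cons_val_zero, Matrix.cons_val_one, Matrix.head_cons, RCLike.inner_apply, conj_trivial,
    Real.cos_sub]

lemma cos_ge_iff (c x : ℝ) (hc0 : -1 ≤ c) (hc : c ≤ 1) :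
    c ≤ Real.cos x ↔ ∃ k : ℤ, |x - 2 * Real.pi * k| ≤ Real.arccos c := by
  have hπ := Real.pi_pos
  constructor
  · intro h
    refine ⟨round (x / (2 * Real.pi)), ?_⟩
    set k := round (x / (2 * Real.pi)) with hkdef
    have hb : |x / (2 * Real.pi) - k| ≤ 1 / 2 := abs_sub_round _
    rw [abs_le] at hb
    have heq : x - 2 * Real.pi * k = 2 * Real.pi * (x / (2 * Real.pi) - k) := by
      field_simp
    have hx : |x - 2 * Real.pi * k| ≤ Real.pi := by
      rw [abs_le, heq]
      constructor <;> nlinarith [hb.1, hb.2]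
    have hcos : c ≤ Real.cos |x - 2 * Real.pi * k| := by
      rw [Real.cos_abs]
      have : Real.cos (x - 2 * Real.pi * k) = Real.cos x := by
        have := Real.cos_sub_int_mul_two_pi x k
        rw [← this]; ring_nf
      linarith [this ▸ h]
    have h1 : Real.arccos (Real.cos |x - 2 * Real.pi * k|) ≤ Real.arccos c :=
      Real.strictAntiOn_arccos.antitoneOn ⟨hc0, hc⟩
        ⟨Real.neg_one_le_cos _, Real.cos_le_one _⟩ hcos
    rwa [Real.arccos_cos (abs_nonneg _) hx] at h1
  · rintro ⟨k, hk⟩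
    have hcos : Real.cos (Real.arccos c) ≤ Real.cos |x - 2 * Real.pi * k| :=
      Real.cos_le_cos_of_nonneg_of_le_pi (abs_nonneg _) (Real.arccos_le_pi c) hk
    rw [Real.cos_arccos hc0 hc, Real.cos_abs] at hcos
    have : Real.cos (x - 2 * Real.pi * k) = Real.cos x := by
      have := Real.cos_sub_int_mul_two_pi x k
      rw [← this]; ring_nf
    linarith [this ▸ hcos]

/-- Key: membership of a boundary point in the disk of angle θ. -/
lemma mem_disk_iff (v : Pt) (d r α θ : ℝ) (hd : 0 < d) (hr : 0 < r) (hdle : d ≤ 2 * r) :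
    dist (v + d • dir α) (v + r • dir θ) ≤ r ↔ θ ∈ angInterval r d α := by
  have hdist : dist (v + d • dir α) (v + r • dir θ) = ‖d • dir α - r • dir θ‖ := by
    rw [dist_add_left, dist_eq_norm]
  have hsq : ‖d • dir α - r • dir θ‖ ^ 2 = d ^ 2 + r ^ 2 - 2 * (d * r) * Real.cos (θ - α) := by
    rw [norm_sub_sq_real, real_inner_smul_left, real_inner_smul_right, inner_dir,
      norm_smul, norm_smul, norm_dir, norm_dir]
    simp [abs_of_pos hd, abs_of_pos hr]
    ring
  have hcosiff : dist (v + d • dir α) (v + r • dir θ) ≤ r ↔ d / (2 * r) ≤ Real.cos (θ - α) := by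
    rw [hdist]
    rw [← pow_le_pow_iff_left₀ (norm_nonneg _) hr.le (two_ne_zero), hsq, div_le_iff₀ (by linarith)]
    constructor <;> intro h <;> nlinarith
  have hnn : (0:ℝ) ≤ d / (2 * r) := by positivity
  rw [hcosiff, cos_ge_iff _ _ (by linarith) (by rw [div_le_one (by linarith)]; linarith)]
  simp only [angInterval, Set.mem_setOf_eq]
  constructor <;> rintro ⟨k, hk⟩ <;> exact ⟨k, by rw [abs_le] at hk ⊢; constructor <;> linarith [hk.1, hk.2]⟩

/-- Every point at distance r has a direction angle. -/
lemma exists_angle (v c : Pt) (r : ℝ) (hr : 0 < r) (h : dist v c = r) :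
    ∃ θ : ℝ, c = v + r • dir θ := by
  set x : Pt := c - v with hx
  have hnx : ‖x‖ = r := by rw [hx, ← dist_eq_norm, dist_comm, h]
  set z : ℂ := ⟨x 0, x 1⟩ with hz
  have habs : ‖z‖ = r := by
    have h2 : ‖z‖ ^ 2 = ‖x‖ ^ 2 := by
      rw [Complex.sq_norm, Complex.normSq_apply, EuclideanSpace.norm_eq]
      rw [Real.sq_sqrt (by positivity)]
      simp [Fin.sum_univ_two, hz, sq]
    have := norm_nonneg z
    nlinarith [hnx ▸ h2]
  have hz0 : z ≠ 0 := by
    intro h0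
    rw [h0, norm_zero] at habs
    linarith
  refine ⟨z.arg, ?_⟩
  have hc : Real.cos z.arg = x 0 / r := by rw [Complex.cos_arg hz0, habs]
  have hs : Real.sin z.arg = x 1 / r := by rw [Complex.sin_arg, habs]
  have : x = r • dir z.arg := by
    ext i
    fin_cases i <;>
      simp [dir, WithLp.equiv_symm_apply, hc, hs, mul_div_cancel₀, hr.ne']
  rw [hx] at this
  rw [show c = v + (c - v) by abel, this]

/-- There is a closed disk of radius `r` whose boundary passes through `v` containing both `A`
and `B` iff the angular intervals of `A` and `B` intersect. -/
theorem stmt18 (v A B : Pt) (r α_A α_B : ℝ) (hr : 0 < r)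
    (hApos : 0 < dist v A) (hAle : dist v A ≤ 2 * r)
    (hBpos : 0 < dist v B) (hBle : dist v B ≤ 2 * r)
    (hαA : A = v + dist v A • dir α_A)
    (hαB : B = v + dist v B • dir α_B) :
    (∃ c : Pt, dist v c = r ∧ dist A c ≤ r ∧ dist B c ≤ r) ↔
      (angInterval r (dist v A) α_A ∩ angInterval r (dist v B) α_B).Nonempty := by
  
  constructor
  · rintro ⟨c, hvc, hAc, hBc⟩
    obtain ⟨θ, rfl⟩ := exists_angle v c r hr hvc
    refine ⟨θ, ?_, ?_⟩
    · exact (mem_disk_iff v _ r α_A θ hApos hr hAle).mp (hαA ▸ hAc)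
    · exact (mem_disk_iff v _ r α_B θ hBpos hr hBle).mp (hαB ▸ hBc)
  · rintro ⟨θ, hθA, hθB⟩
    refine ⟨v + r • dir θ, ?_, ?_, ?_⟩
    · rw [dist_eq_norm]
      simp [norm_smul, norm_dir, abs_of_pos hr]
    · rw [hαA]; exact (mem_disk_iff v _ r α_A θ hApos hr hAle).mpr hθA
    · rw [hαB]; exact (mem_disk_iff v _ r α_B θ hBpos hr hBle).mpr hθB
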